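/- Let b₁, …, b_m ∈ ℝⁿ satisfy ∑_{i=1}^m bᵢbᵢᵀ = Iₙ, and let g ∼ N(0, Iₙ) be a standard Gaussian vector on ℝⁿ. Then E[ ( ∑_{i=1}^m (bᵢᵀg)³ )² ] ≤ 15n. -/

import Mathlib

open Matrix MeasureTheory ProbabilityTheory
open Real Set
open scoped ENNReal NNReal

/-- The standard Gaussian measure N(0, Iₙ) on ℝⁿ. -/
noncomputable def stdGauss (n : ℕ) : Measure (Fin n → ℝ) :=
  Measure.pi fun _ => gaussianReal 0 1

noncomputable def gpdf (x : ℝ) : ℝ := gaussianPDFReal 0 1 x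

lemma gpdf_eq (x : ℝ) : gpdf x = (Real.sqrt (2 * π))⁻¹ * rexp (-x ^ 2 / 2) := by
  simp [gpdf, gaussianPDFReal]

lemma integral_gauss_eq (f : ℝ → ℝ) :
    ∫ x, f x ∂(gaussianReal 0 1) = ∫ x, gpdf x * f x := by
  rw [gaussianReal_of_var_ne_zero 0 one_ne_zero]
  have h1 : gaussianPDF 0 1 = fun x => ((gaussianPDFReal 0 1 x).toNNReal : ℝ≥0∞) := by
    funext x; simp [gaussianPDF, ENNReal.ofReal]
  rw [h1, integral_withDensity_eq_integral_smul
    ((measurable_gaussianPDFReal 0 1).real_toNNReal) f]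
  congr 1; funext x
  simp [NNReal.smul_def, Real.coe_toNNReal _ (gaussianPDFReal_nonneg 0 1 x), gpdf]

lemma integrable_pow_exp (k : ℕ) :
    Integrable (fun x : ℝ => x ^ k * rexp (-(1/2 : ℝ) * x ^ 2)) := by
  have h := integrable_rpow_mul_exp_neg_mul_sq (b := (1/2 : ℝ)) (by norm_num) (s := (k : ℝ))
    (lt_of_lt_of_le neg_one_lt_zero (Nat.cast_nonneg k))
  refine h.congr (Filter.Eventually.of_forall fun x => ?_)
  simp [Real.rpow_natCast]

lemma integrable_pow_gauss (k : ℕ) :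
    Integrable (fun x : ℝ => x ^ k) (gaussianReal 0 1) := by
  rw [gaussianReal_of_var_ne_zero 0 one_ne_zero]
  have h1 : gaussianPDF 0 1 = fun x => ((gaussianPDFReal 0 1 x).toNNReal : ℝ≥0∞) := by
    funext x; simp [gaussianPDF, ENNReal.ofReal]
  rw [h1, integrable_withDensity_iff_integrable_smul
    ((measurable_gaussianPDFReal 0 1).real_toNNReal)]
  apply Integrable.mono' (((integrable_pow_exp k).abs).const_mul ((Real.sqrt (2 * π))⁻¹))
  · apply AEStronglyMeasurable.smul
    · exact (measurable_gaussianPDFReal 0 1).real_toNNReal.coe_nnreal_real.aestronglyMeasurable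
    · exact (measurable_id.pow_const k).aestronglyMeasurable
  · filter_upwards with x
    rw [NNReal.smul_def, Real.coe_toNNReal _ (gaussianPDFReal_nonneg 0 1 x)]
    have h2 : gaussianPDFReal 0 1 x = (Real.sqrt (2 * π))⁻¹ * rexp (-(1/2:ℝ) * x ^ 2) := by
      simp only [gaussianPDFReal, NNReal.coe_one, mul_one, sub_zero]
      congr 1
      ring
    rw [Real.norm_eq_abs, h2, smul_eq_mul]
    refine le_of_eq ?_
    rw [abs_mul, abs_mul, abs_mul, abs_of_pos (exp_pos _),
      abs_of_pos (by positivity : (0:ℝ) < (Real.sqrt (2 * π))⁻¹)]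
    ring

lemma gauss_map_neg : (gaussianReal 0 1).map (fun x => (-1:ℝ) * x) = gaussianReal 0 1 := by
  have h := gaussianReal_map_const_mul (μ := 0) (v := 1) (-1)
  have h2 : (⟨(-1:ℝ)^2, sq_nonneg _⟩ : ℝ≥0) = 1 := by ext; norm_num
  simpa [h2] using h

lemma gauss_pow_odd (k : ℕ) (hk : Odd k) : ∫ x, x ^ k ∂(gaussianReal 0 1) = 0 := by
  have h : ∫ x, x ^ k ∂(gaussianReal 0 1) = ∫ x, ((-1) * x) ^ k ∂(gaussianReal 0 1) := by
    conv_lhs => rw [← gauss_map_neg]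
    rw [integral_map (by fun_prop) (by fun_prop)]
  simp only [mul_pow, hk.neg_one_pow, neg_one_mul, neg_pow, integral_neg] at h
  linarith

lemma helper1 (j : ℕ) :
    ∫ x : ℝ, x ^ (2*j) * rexp (-(1/2:ℝ) * x ^ 2)
      = (2:ℝ) ^ ((2*(j:ℝ)+1)/2) * Real.Gamma ((2*(j:ℝ)+1)/2) := by
  have heven : (fun x : ℝ => x ^ (2*j) * rexp (-(1/2:ℝ) * x ^ 2))
      = fun x : ℝ => |x| ^ (2*j) * rexp (-(1/2:ℝ) * |x| ^ 2) := by
    funext x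
    rw [(even_two_mul j).pow_abs, sq_abs]
  rw [heven, integral_comp_abs (f := fun x : ℝ => x ^ (2*j) * rexp (-(1/2:ℝ) * x ^ 2))]
  have hcongr : ∫ x in Ioi (0:ℝ), x ^ (2*j) * rexp (-(1/2:ℝ) * x ^ 2)
      = ∫ x in Ioi (0:ℝ), x ^ ((2*j : ℕ) : ℝ) * rexp (-(1/2:ℝ) * x ^ ((2:ℕ):ℝ)) := by
    refine setIntegral_congr_fun measurableSet_Ioi (fun x _ => ?_)
    rw [Real.rpow_natCast, Real.rpow_natCast]
  rw [hcongr]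
  have := integral_rpow_mul_exp_neg_mul_rpow (p := ((2:ℕ):ℝ)) (q := ((2*j:ℕ):ℝ)) (b := (1/2:ℝ))
    (by norm_num) (lt_of_lt_of_le neg_one_lt_zero (by positivity)) (by norm_num)
  rw [this]
  have h12 : ((1:ℝ)/2) ^ (-(((2*j:ℕ):ℝ) + 1) / ((2:ℕ):ℝ)) = (2:ℝ) ^ ((2*(j:ℝ)+1)/2) := by
    rw [one_div, ← Real.rpow_neg_one (2:ℝ), ← Real.rpow_mul (by norm_num : (0:ℝ) ≤ 2)]
    congr 1
    push_cast
    ring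
  rw [h12]
  have harg : ((((2*j:ℕ)):ℝ)+1)/((2:ℕ):ℝ) = (2*(j:ℝ)+1)/2 := by push_cast; ring
  rw [harg]
  push_cast
  ring

lemma gauss_pow_even (j : ℕ) :
    ∫ x, x ^ (2*j) ∂(gaussianReal 0 1)
      = 2 ^ j * Real.Gamma ((2*(j:ℝ)+1)/2) / Real.sqrt π := by
  rw [integral_gauss_eq]
  have h1 : (fun x : ℝ => gpdf x * x ^ (2*j))
      = fun x : ℝ => (Real.sqrt (2*π))⁻¹ * (x ^ (2*j) * rexp (-(1/2:ℝ) * x ^ 2)) := by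
    funext x
    rw [gpdf_eq]
    have : -x^2/2 = -(1/2:ℝ) * x^2 := by ring
    rw [this]
    ring
  rw [h1, integral_const_mul, helper1]
  have h2 : (2:ℝ) ^ ((2*(j:ℝ)+1)/2) = 2 ^ j * Real.sqrt 2 := by
    rw [show (2*(j:ℝ)+1)/2 = (j:ℝ) + 1/2 by ring, Real.rpow_add two_pos,
      Real.rpow_natCast, ← Real.sqrt_eq_rpow]
  rw [h2, Real.sqrt_mul (by norm_num : (0:ℝ) ≤ 2)]
  have hs2 : Real.sqrt 2 ≠ 0 := by positivity
  have hsp : Real.sqrt π ≠ 0 := by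
    have := Real.pi_pos; positivity
  field_simp

lemma Gamma32 : Real.Gamma ((3:ℝ)/2) = Real.sqrt π / 2 := by
  rw [show (3:ℝ)/2 = 1/2 + 1 by norm_num, Real.Gamma_add_one (by norm_num),
    Real.Gamma_one_half_eq]
  ring

lemma Gamma52 : Real.Gamma ((5:ℝ)/2) = 3 * Real.sqrt π / 4 := by
  rw [show (5:ℝ)/2 = 3/2 + 1 by norm_num, Real.Gamma_add_one (by norm_num), Gamma32]
  ring

lemma Gamma72 : Real.Gamma ((7:ℝ)/2) = 15 * Real.sqrt π / 8 := by
  rw [show (7:ℝ)/2 = 5/2 + 1 by norm_num, Real.Gamma_add_one (by norm_num), Gamma52]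
  ring

lemma sqrtpi_ne : Real.sqrt π ≠ 0 := by have := Real.pi_pos; positivity

lemma gauss_pow_0 : ∫ x, x ^ 0 ∂(gaussianReal 0 1) = 1 := by simp

lemma gauss_pow_2 : ∫ x, x ^ 2 ∂(gaussianReal 0 1) = 1 := by
  have h := gauss_pow_even 1
  norm_num [Gamma32] at h
  rw [h]
  field_simp

lemma gauss_pow_4 : ∫ x, x ^ 4 ∂(gaussianReal 0 1) = 3 := by
  have h := gauss_pow_even 2
  norm_num [Gamma52] at h
  rw [h]
  field_simp

lemma gauss_pow_6 : ∫ x, x ^ 6 ∂(gaussianReal 0 1) = 15 := by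
  have h := gauss_pow_even 3
  norm_num [Gamma72] at h
  rw [h]
  field_simp

noncomputable def gm (k : ℕ) : ℝ := ∫ x, x ^ k ∂(gaussianReal 0 1)

@[simp] lemma gm0 : gm 0 = 1 := gauss_pow_0
@[simp] lemma gm1 : gm 1 = 0 := gauss_pow_odd 1 ⟨0, by norm_num⟩
@[simp] lemma gm2 : gm 2 = 1 := gauss_pow_2
@[simp] lemma gm3 : gm 3 = 0 := gauss_pow_odd 3 ⟨1, by norm_num⟩
@[simp] lemma gm4 : gm 4 = 3 := gauss_pow_4
@[simp] lemma gm5 : gm 5 = 0 := gauss_pow_odd 5 ⟨2, by norm_num⟩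
@[simp] lemma gm6 : gm 6 = 15 := gauss_pow_6

/-- Mixed Gaussian moments table. -/
def Mm (p q : ℕ) (A B C : ℝ) : ℝ :=
  match p, q with
  | 0, 0 => 1
  | 1, 1 => C
  | 2, 0 => A
  | 0, 2 => B
  | 2, 2 => A * B + 2 * C ^ 2
  | 3, 1 => 3 * A * C
  | 1, 3 => 3 * B * C
  | 3, 3 => 9 * A * B * C + 6 * C ^ 3
  | _, _ => 0

lemma Mm_zero (p q : ℕ) (hp : p ≤ 3) (hq : q ≤ 3) :
    Mm p q 0 0 0 = (0:ℝ) ^ p * (0:ℝ) ^ q := by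
  interval_cases p <;> interval_cases q <;> norm_num [Mm]

set_option maxHeartbeats 1000000 in
lemma table (p q : ℕ) (hp : p ≤ 3) (hq : q ≤ 3) (A B C a b : ℝ) :
    ∑ k ∈ Finset.range (p+1), ∑ l ∈ Finset.range (q+1),
      ((p.choose k : ℝ) * (q.choose l) * a ^ (p-k) * b ^ (q-l) * gm ((p-k)+(q-l)))
        * Mm k l A B C
      = Mm p q (a*a + A) (b*b + B) (a*b + C) := by
  interval_cases p <;> interval_cases q <;>
    (simp only [Finset.sum_range_succ, Finset.sum_range_zero, zero_add, Nat.choose,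
      Nat.reduceAdd, Nat.reduceSub, Nat.cast_ofNat, Nat.cast_one, Nat.cast_zero,
      gm0, gm1, gm2, gm3, gm4, gm5, gm6, Mm]) <;> ring

instance stdGauss_prob (n : ℕ) : IsProbabilityMeasure (stdGauss n) := by
  unfold stdGauss; infer_instance

lemma dot_split {n : ℕ} (w w' : Fin (n+1) → ℝ) :
    w ⬝ᵥ w' = w 0 * w' 0 + Fin.tail w ⬝ᵥ Fin.tail w' := by
  simp [dotProduct, Fin.sum_univ_succ, Fin.tail]

lemma key (n : ℕ) : ∀ (p q : ℕ), p ≤ 3 → q ≤ 3 → ∀ (u v : Fin n → ℝ),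
    Integrable (fun g => (u ⬝ᵥ g) ^ p * (v ⬝ᵥ g) ^ q) (stdGauss n) ∧
    ∫ g, (u ⬝ᵥ g) ^ p * (v ⬝ᵥ g) ^ q ∂(stdGauss n)
      = Mm p q (u ⬝ᵥ u) (v ⬝ᵥ v) (u ⬝ᵥ v) := by
  induction n with
  | zero =>
    intro p q hp hq u v
    have hzero : ∀ w w' : Fin 0 → ℝ, w ⬝ᵥ w' = 0 := by
      intro w w'; simp [dotProduct]
    have hf : (fun g : Fin 0 → ℝ => (u ⬝ᵥ g) ^ p * (v ⬝ᵥ g) ^ q)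
        = fun _ => (0:ℝ) ^ p * (0:ℝ) ^ q := funext fun g => by rw [hzero, hzero]
    rw [hf, hzero u u, hzero v v, hzero u v]
    refine ⟨integrable_const _, ?_⟩
    rw [integral_const, Mm_zero p q hp hq]
    simp
  | succ n ih =>
    intro p q hp hq u v
    set γ := gaussianReal 0 1 with hγ
    set e := MeasurableEquiv.piFinSuccAbove (fun _ : Fin (n+1) => ℝ) 0 with he
    have hmp : MeasurePreserving (⇑e) (stdGauss (n+1)) (γ.prod (stdGauss n)) :=
      measurePreserving_piFinSuccAbove (fun _ => γ) 0
    have hmps : MeasurePreserving (⇑e.symm) (γ.prod (stdGauss n)) (stdGauss (n+1)) :=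
      hmp.symm e
    have hdot : ∀ (w : Fin (n+1) → ℝ) (z : ℝ × (Fin n → ℝ)),
        w ⬝ᵥ (e.symm z) = Fin.tail w ⬝ᵥ z.2 + w 0 * z.1 := by
      intro w z
      have hz : e.symm z = Fin.insertNth 0 z.1 z.2 := rfl
      rw [hz, dotProduct, Fin.sum_univ_succAbove _ 0]
      simp only [Fin.insertNth_apply_same, Fin.insertNth_apply_succAbove]
      rw [add_comm]
      congr 1
    set u' := Fin.tail u with hu'
    set v' := Fin.tail v with hv'
    set a := u 0 with ha
    set b0 := v 0 with hb0
    have hfe : (fun z : ℝ × (Fin n → ℝ) =>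
          (u ⬝ᵥ (e.symm z)) ^ p * (v ⬝ᵥ (e.symm z)) ^ q)
        = fun z => ∑ k ∈ Finset.range (p+1), ∑ l ∈ Finset.range (q+1),
            (((p.choose k : ℝ) * (q.choose l) * a ^ (p-k) * b0 ^ (q-l)) * z.1 ^ ((p-k)+(q-l)))
              * ((u' ⬝ᵥ z.2) ^ k * (v' ⬝ᵥ z.2) ^ l) := by
      funext z
      rw [hdot u z, hdot v z, add_pow, add_pow, Finset.sum_mul_sum]
      refine Finset.sum_congr rfl fun k hk => Finset.sum_congr rfl fun l hl => ?_
      rw [mul_pow, mul_pow]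
      ring
    have hterm : ∀ k ∈ Finset.range (p+1), ∀ l ∈ Finset.range (q+1),
        Integrable (fun z : ℝ × (Fin n → ℝ) =>
          (((p.choose k : ℝ) * (q.choose l) * a ^ (p-k) * b0 ^ (q-l)) * z.1 ^ ((p-k)+(q-l)))
            * ((u' ⬝ᵥ z.2) ^ k * (v' ⬝ᵥ z.2) ^ l)) (γ.prod (stdGauss n)) := by
      intro k hk l hl
      have h1 : Integrable (fun t : ℝ =>
          ((p.choose k : ℝ) * (q.choose l) * a ^ (p-k) * b0 ^ (q-l)) * t ^ ((p-k)+(q-l))) γ :=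
        (integrable_pow_gauss _).const_mul _
      have h2 := (ih k l (le_trans (Nat.lt_succ_iff.mp (Finset.mem_range.mp hk)) hp)
        (le_trans (Nat.lt_succ_iff.mp (Finset.mem_range.mp hl)) hq) u' v').1
      exact h1.mul_prod h2
    have hintsum : Integrable (fun z : ℝ × (Fin n → ℝ) =>
        ∑ k ∈ Finset.range (p+1), ∑ l ∈ Finset.range (q+1),
          (((p.choose k : ℝ) * (q.choose l) * a ^ (p-k) * b0 ^ (q-l)) * z.1 ^ ((p-k)+(q-l)))
            * ((u' ⬝ᵥ z.2) ^ k * (v' ⬝ᵥ z.2) ^ l)) (γ.prod (stdGauss n)) := by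
      apply integrable_finset_sum
      intro k hk
      exact integrable_finset_sum _ (fun l hl => hterm k hk l hl)
    constructor
    · rw [show (fun g => (u ⬝ᵥ g) ^ p * (v ⬝ᵥ g) ^ q)
          = (fun z : ℝ × (Fin n → ℝ) =>
              (u ⬝ᵥ (e.symm z)) ^ p * (v ⬝ᵥ (e.symm z)) ^ q) ∘ ⇑e from ?_]
      · exact (hmp.integrable_comp_emb e.measurableEmbedding).mpr (hfe ▸ hintsum)
      · funext g
        simp [Function.comp, MeasurableEquiv.symm_apply_apply]
    · have hIeq : ∫ g, (u ⬝ᵥ g) ^ p * (v ⬝ᵥ g) ^ q ∂(stdGauss (n+1))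
          = ∫ z, (u ⬝ᵥ (e.symm z)) ^ p * (v ⬝ᵥ (e.symm z)) ^ q ∂(γ.prod (stdGauss n)) :=
        (hmps.integral_comp' (fun g => (u ⬝ᵥ g) ^ p * (v ⬝ᵥ g) ^ q)).symm
      rw [hIeq, hfe]
      rw [integral_finset_sum _ (fun k hk =>
        integrable_finset_sum _ (fun l hl => hterm k hk l hl))]
      have hinner : ∀ k ∈ Finset.range (p+1),
          ∫ z, ∑ l ∈ Finset.range (q+1),
            (((p.choose k : ℝ) * (q.choose l) * a ^ (p-k) * b0 ^ (q-l)) * z.1 ^ ((p-k)+(q-l)))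
              * ((u' ⬝ᵥ z.2) ^ k * (v' ⬝ᵥ z.2) ^ l) ∂(γ.prod (stdGauss n))
          = ∑ l ∈ Finset.range (q+1),
            ((p.choose k : ℝ) * (q.choose l) * a ^ (p-k) * b0 ^ (q-l) * gm ((p-k)+(q-l)))
              * Mm k l (u' ⬝ᵥ u') (v' ⬝ᵥ v') (u' ⬝ᵥ v') := by
        intro k hk
        rw [integral_finset_sum _ (fun l hl => hterm k hk l hl)]
        refine Finset.sum_congr rfl fun l hl => ?_
        rw [integral_prod_mul (μ := γ) (ν := stdGauss n)
          (f := fun t : ℝ => ((p.choose k : ℝ) * (q.choose l) * a ^ (p-k) * b0 ^ (q-l))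
            * t ^ ((p-k)+(q-l)))
          (g := fun y => (u' ⬝ᵥ y) ^ k * (v' ⬝ᵥ y) ^ l)]
        rw [integral_const_mul]
        rw [(ih k l (le_trans (Nat.lt_succ_iff.mp (Finset.mem_range.mp hk)) hp)
          (le_trans (Nat.lt_succ_iff.mp (Finset.mem_range.mp hl)) hq) u' v').2]
        rw [← gm]
      rw [Finset.sum_congr rfl hinner]
      rw [table p q hp hq _ _ _ a b0]
      rw [dot_split u u, dot_split v v, dot_split u v]

theorem second_moment_sum_cubes_le {n m : ℕ} (b : Fin m → Fin n → ℝ)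
    (hb : ∑ i, vecMulVec (b i) (b i) = (1 : Matrix (Fin n) (Fin n) ℝ)) :
    ∫ g, (∑ i, (b i ⬝ᵥ g) ^ 3) ^ 2 ∂(stdGauss n) ≤ 15 * n := by
  classical
  have hδ : ∀ k l : Fin n, ∑ i, b i k * b i l = if k = l then (1:ℝ) else 0 := by
    intro k l
    have h := congrFun (congrFun hb k) l
    simpa [Matrix.sum_apply, vecMulVec_apply, Matrix.one_apply] using h
  have hI : ∀ x y : Fin n → ℝ, ∑ i, (b i ⬝ᵥ x) * (b i ⬝ᵥ y) = x ⬝ᵥ y := by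
    intro x y
    calc ∑ i, (b i ⬝ᵥ x) * (b i ⬝ᵥ y)
        = ∑ i, ∑ k, ∑ l, (b i k * x k) * (b i l * y l) := by
          refine Finset.sum_congr rfl fun i _ => ?_
          rw [dotProduct, dotProduct, Finset.sum_mul_sum]
      _ = ∑ k, ∑ l, (∑ i, b i k * b i l) * (x k * y l) := by
          rw [Finset.sum_comm]
          refine Finset.sum_congr rfl fun k _ => ?_
          rw [Finset.sum_comm]
          refine Finset.sum_congr rfl fun l _ => ?_
          rw [Finset.sum_mul]
          exact Finset.sum_congr rfl fun i _ => by ring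
      _ = ∑ k, ∑ l, (if k = l then (1:ℝ) else 0) * (x k * y l) := by
          exact Finset.sum_congr rfl fun k _ => Finset.sum_congr rfl fun l _ => by rw [hδ]
      _ = ∑ k, x k * y k := by
          refine Finset.sum_congr rfl fun k _ => ?_
          simp
      _ = x ⬝ᵥ y := rfl
  set A : Fin m → ℝ := fun i => b i ⬝ᵥ b i with hA
  set C : Fin m → Fin m → ℝ := fun i j => b i ⬝ᵥ b j with hC
  have hA0 : ∀ i, 0 ≤ A i := fun i => Finset.sum_nonneg fun k _ => mul_self_nonneg _
  have hAsum : ∑ i, A i = (n:ℝ) := by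
    calc ∑ i, A i = ∑ i, ∑ k, b i k * b i k := rfl
      _ = ∑ k : Fin n, ∑ i, b i k * b i k := Finset.sum_comm
      _ = ∑ k : Fin n, (1:ℝ) := by
          refine Finset.sum_congr rfl fun k _ => ?_
          rw [hδ k k, if_pos rfl]
      _ = (n:ℝ) := by simp
  have hCsum : ∀ i, ∑ j, (C j i) ^ 2 = A i := by
    intro i
    have h := hI (b i) (b i)
    calc ∑ j, (C j i) ^ 2 = ∑ j, (b j ⬝ᵥ b i) * (b j ⬝ᵥ b i) := by
          exact Finset.sum_congr rfl fun j _ => sq (C j i) ▸ by rw [pow_two]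
      _ = A i := h
  have hCS : ∀ i j, (C i j) ^ 2 ≤ A i * A j := by
    intro i j
    have h := Finset.sum_mul_sq_le_sq_mul_sq Finset.univ (b i) (b j)
    simpa [hA, hC, dotProduct, pow_two] using h
  have hA1 : ∀ i, A i ≤ 1 := by
    intro i
    have h1 : (C i i) ^ 2 ≤ ∑ j, (C j i) ^ 2 :=
      Finset.single_le_sum (f := fun j => (C j i) ^ 2) (fun j _ => sq_nonneg _)
        (Finset.mem_univ i)
    rw [hCsum i] at h1
    have h2 : C i i = A i := rfl
    rw [h2] at h1
    nlinarith [hA0 i]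
  -- integral computation
  have hXint : ∀ i j : Fin m, Integrable (fun g => (b i ⬝ᵥ g) ^ 3 * (b j ⬝ᵥ g) ^ 3) (stdGauss n) :=
    fun i j => (key n 3 3 le_rfl le_rfl (b i) (b j)).1
  have hXval : ∀ i j, ∫ g, (b i ⬝ᵥ g) ^ 3 * (b j ⬝ᵥ g) ^ 3 ∂(stdGauss n)
      = 9 * A i * A j * C i j + 6 * (C i j) ^ 3 := by
    intro i j
    have h := (key n 3 3 le_rfl le_rfl (b i) (b j)).2
    rw [h]
    simp only [Mm, hA, hC]
    try ring
  have hexp : (fun g : Fin n → ℝ => (∑ i, (b i ⬝ᵥ g) ^ 3) ^ 2)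
      = fun g => ∑ i, ∑ j, (b i ⬝ᵥ g) ^ 3 * (b j ⬝ᵥ g) ^ 3 := by
    funext g
    rw [sq, Finset.sum_mul_sum]
  rw [hexp, integral_finset_sum _ (fun i _ => integrable_finset_sum _ (fun j _ => hXint i j))]
  have hval2 : ∑ i, ∫ g, ∑ j, (b i ⬝ᵥ g) ^ 3 * (b j ⬝ᵥ g) ^ 3 ∂(stdGauss n)
      = ∑ i, ∑ j, (9 * A i * A j * C i j + 6 * (C i j) ^ 3) := by
    refine Finset.sum_congr rfl fun i _ => ?_
    rw [integral_finset_sum _ (fun j _ => hXint i j)]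
    exact Finset.sum_congr rfl fun j _ => hXval i j
  rw [hval2]
  have hsplit : ∑ i, ∑ j, (9 * A i * A j * C i j + 6 * (C i j) ^ 3)
      = 9 * (∑ i, ∑ j, A i * A j * C i j) + 6 * (∑ i, ∑ j, (C i j) ^ 3) := by
    rw [Finset.mul_sum, Finset.mul_sum, ← Finset.sum_add_distrib]
    refine Finset.sum_congr rfl fun i _ => ?_
    rw [Finset.mul_sum, Finset.mul_sum, ← Finset.sum_add_distrib]
    exact Finset.sum_congr rfl fun j _ => by ring
  rw [hsplit]
  -- second part bound
  have hS2 : ∑ i, ∑ j, (C i j) ^ 3 ≤ (n:ℝ) := by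
    have hterm : ∀ i j : Fin m, (C i j) ^ 3 ≤ (C i j) ^ 2 := by
      intro i j
      have h1 : (C i j) ^ 2 ≤ 1 := le_trans (hCS i j)
        (by nlinarith [hA0 i, hA0 j, hA1 i, hA1 j])
      have hcle : C i j ≤ 1 := by nlinarith [sq_nonneg (1 - C i j)]
      nlinarith [sq_nonneg (C i j), hcle]
    calc ∑ i, ∑ j, (C i j) ^ 3 ≤ ∑ i, ∑ j, (C i j) ^ 2 :=
          Finset.sum_le_sum fun i _ => Finset.sum_le_sum fun j _ => hterm i j
      _ = ∑ j, ∑ i, (C i j) ^ 2 := Finset.sum_comm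
      _ = ∑ j, A j := Finset.sum_congr rfl fun j _ => hCsum j
      _ = (n:ℝ) := hAsum
  -- first part bound
  have hS1 : ∑ i, ∑ j, A i * A j * C i j ≤ (n:ℝ) := by
    set y : Fin n → ℝ := fun k => ∑ j, A j * b j k with hy
    have h1 : ∑ i, ∑ j, A i * A j * C i j = y ⬝ᵥ y := by
      calc ∑ i, ∑ j, A i * A j * C i j
          = ∑ i, ∑ j, ∑ k, (A i * b i k) * (A j * b j k) := by
            refine Finset.sum_congr rfl fun i _ => Finset.sum_congr rfl fun j _ => ?_
            rw [hC]
            show A i * A j * ∑ k, b i k * b j k = _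
            rw [Finset.mul_sum]
            exact Finset.sum_congr rfl fun k _ => by ring
        _ = ∑ k : Fin n, ∑ i, ∑ j, (A i * b i k) * (A j * b j k) := by
            rw [show (∑ i, ∑ j, ∑ k : Fin n, (A i * b i k) * (A j * b j k))
                = ∑ i, ∑ k : Fin n, ∑ j, (A i * b i k) * (A j * b j k) from
              Finset.sum_congr rfl fun i _ => Finset.sum_comm]
            exact Finset.sum_comm
        _ = ∑ k : Fin n, (∑ i, A i * b i k) * (∑ j, A j * b j k) := by
            refine Finset.sum_congr rfl fun k _ => ?_
            rw [Finset.sum_mul_sum]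
        _ = y ⬝ᵥ y := rfl
    have h2 : ∑ j, A j * (b j ⬝ᵥ y) = y ⬝ᵥ y := by
      calc ∑ j, A j * (b j ⬝ᵥ y) = ∑ j, ∑ k, A j * (b j k * y k) := by
            refine Finset.sum_congr rfl fun j _ => ?_
            rw [dotProduct, Finset.mul_sum]
        _ = ∑ k, y k * ∑ j, A j * b j k := by
            rw [Finset.sum_comm]
            refine Finset.sum_congr rfl fun k _ => ?_
            rw [Finset.mul_sum]
            exact Finset.sum_congr rfl fun j _ => by ring
        _ = y ⬝ᵥ y := by
            refine Finset.sum_congr rfl fun k _ => ?_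
            rw [mul_comm]
    have h3 : ∑ j, (b j ⬝ᵥ y) ^ 2 = y ⬝ᵥ y := by
      have h := hI y y
      calc ∑ j, (b j ⬝ᵥ y) ^ 2 = ∑ j, (b j ⬝ᵥ y) * (b j ⬝ᵥ y) :=
            Finset.sum_congr rfl fun j _ => by rw [pow_two]
        _ = y ⬝ᵥ y := h
    have hy0 : 0 ≤ y ⬝ᵥ y := Finset.sum_nonneg fun k _ => mul_self_nonneg _
    have hcs := Finset.sum_mul_sq_le_sq_mul_sq Finset.univ A (fun j => b j ⬝ᵥ y)
    rw [h2, h3] at hcs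
    have hAA : ∑ j, (A j) ^ 2 ≤ (n:ℝ) := by
      rw [← hAsum]
      exact Finset.sum_le_sum fun j _ => by nlinarith [hA0 j, hA1 j]
    have hS0 : (0:ℝ) ≤ ∑ j, (A j) ^ 2 := Finset.sum_nonneg fun j _ => sq_nonneg _
    have h4 : y ⬝ᵥ y ≤ ∑ j, (A j) ^ 2 := by
      rcases eq_or_lt_of_le hy0 with h0 | h0
      · rw [← h0]; exact hS0
      · nlinarith [hcs, h0]
    rw [h1]
    exact le_trans h4 hAA
  linarith
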